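/- Let Λ be a topological group and let Γ be a dense subgroup of Λ. Let φ : Γ → ℝ be a homogeneous quasimorphism on Γ that is continuous with respect to the subspace topology. Then there exists a homogeneous quasimorphism ψ : Λ → ℝ that is continuous and satisfies ψ(γ) = φ(γ) for every γ ∈ Γ. -/

import Mathlib

open Filter Topology

/-- A continuous homogeneous quasimorphism on a dense subgroup of a topological group extends
to a continuous homogeneous quasimorphism on the whole group. -/
theorem stmt7 {Λ : Type*} [Group Λ] [TopologicalSpace Λ] [IsTopologicalGroup Λ]
    (Γ : Subgroup Λ) (hdense : Dense (Γ : Set Λ))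
    (φ : Γ → ℝ)
    (hq : ∃ D ≥ (0 : ℝ), ∀ a b : Γ, |φ (a * b) - φ a - φ b| ≤ D)
    (hhom : ∀ (g : Γ) (n : ℤ), φ (g ^ n) = n * φ g)
    (hcont : Continuous φ) :
    ∃ ψ : Λ → ℝ,
      (∃ D ≥ (0 : ℝ), ∀ a b : Λ, |ψ (a * b) - ψ a - ψ b| ≤ D) ∧
      (∀ (g : Λ) (n : ℤ), ψ (g ^ n) = n * ψ g) ∧
      Continuous ψ ∧
      ∀ γ : Γ, ψ (γ : Λ) = φ γ := by
  obtain ⟨D, hD0, hDq⟩ := hq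
  have hφ1 : φ 1 = 0 := by simpa using hhom 1 0
  -- density helper: Γ meets every neighborhood
  have hmeet : ∀ (l : Λ) (V : Set Λ), V ∈ 𝓝 l → ∃ γ : Γ, (γ : Λ) ∈ V := by
    intro l V hV
    obtain ⟨O, hOV, hO, hlO⟩ := mem_nhds_iff.mp hV
    obtain ⟨x, hxΓ, hxO⟩ := hdense.exists_mem_open hO ⟨l, hlO⟩
    exact ⟨⟨x, hxΓ⟩, hOV hxO⟩
  -- an open neighborhood of 1 on which |φ| ≤ 1
  obtain ⟨W, hW1, hWo, hWb⟩ :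
      ∃ W : Set Λ, (1 : Λ) ∈ W ∧ IsOpen W ∧ ∀ γ : Γ, (γ : Λ) ∈ W → |φ γ| ≤ 1 := by
    have h1 : {η : Γ | |φ η| ≤ 1} ∈ 𝓝 (1 : Γ) := by
      have hc : ContinuousAt φ (1 : Γ) := hcont.continuousAt
      have h2 := hc.preimage_mem_nhds (t := Metric.closedBall 0 1)
        (by rw [hφ1]; exact Metric.closedBall_mem_nhds 0 one_pos)
      refine Filter.mem_of_superset h2 ?_
      intro η hη
      simpa [Real.dist_eq] using hη
    rw [nhds_subtype] at h1
    obtain ⟨W₀, hW₀, hsub⟩ := Filter.mem_comap.mp h1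
    obtain ⟨O, hOW, hO, h1O⟩ := mem_nhds_iff.mp hW₀
    refine ⟨O, by simpa using h1O, hO, ?_⟩
    intro γ hγ
    exact hsub (hOW hγ)
  -- oscillation bound: near every point, values of φ lie within D + 1 of each other
  have hosc : ∀ l : Λ, ∃ U ∈ 𝓝 l, ∀ γ δ : Γ, (γ : Λ) ∈ U → (δ : Λ) ∈ U →
      |φ γ - φ δ| ≤ D + 1 := by
    intro l
    have hc : ContinuousAt (fun p : Λ × Λ => p.1⁻¹ * p.2) (l, l) := by fun_prop
    have hpre : (fun p : Λ × Λ => p.1⁻¹ * p.2) ⁻¹' W ∈ 𝓝 (l, l) :=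
      hc.preimage_mem_nhds (by simpa using hWo.mem_nhds hW1)
    obtain ⟨u, hu, v, hv, huv⟩ := mem_nhds_prod_iff.mp hpre
    refine ⟨u ∩ v, inter_mem hu hv, ?_⟩
    intro γ δ hγ hδ
    have hη : ((δ⁻¹ * γ : Γ) : Λ) ∈ W := by
      have hm : ((δ : Λ), (γ : Λ)) ∈ u ×ˢ v := ⟨hδ.1, hγ.2⟩
      simpa using huv hm
    have h1 : |φ (δ⁻¹ * γ)| ≤ 1 := hWb _ hη
    have h2 : |φ (δ * (δ⁻¹ * γ)) - φ δ - φ (δ⁻¹ * γ)| ≤ D := hDq δ (δ⁻¹ * γ)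
    rw [mul_inv_cancel_left] at h2
    rw [abs_le] at h1 h2 ⊢
    constructor <;> linarith [h1.1, h1.2, h2.1, h2.2]
  -- choose approximate values
  have key : ∀ l : Λ, ∃ a : ℝ, ∃ U ∈ 𝓝 l, ∀ γ : Γ, (γ : Λ) ∈ U → |φ γ - a| ≤ D + 1 := by
    intro l
    obtain ⟨U, hU, hUo⟩ := hosc l
    obtain ⟨γ₀, hγ₀⟩ := hmeet l U hU
    exact ⟨φ γ₀, U, hU, fun γ hγ => hUo γ γ₀ hγ hγ₀⟩
  choose A hA using key
  have hAΓ : ∀ δ : Γ, |A ↑δ - φ δ| ≤ D + 1 := by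
    intro δ
    obtain ⟨U, hU, h⟩ := hA ↑δ
    have := h δ (mem_of_mem_nhds hU)
    rwa [abs_sub_comm]
  have hA1 : |A 1| ≤ D + 1 := by simpa [hφ1] using hAΓ 1
  set DA : ℝ := 4 * D + 4 with hDAdef
  have hDA0 : 0 < DA := by simp only [hDAdef]; linarith
  -- A is a quasimorphism
  have hAq : ∀ l m : Λ, |A (l * m) - A l - A m| ≤ DA := by
    intro l m
    obtain ⟨Ul, hUl, hl⟩ := hA l
    obtain ⟨Um, hUm, hm⟩ := hA m
    obtain ⟨Ulm, hUlm, hlm⟩ := hA (l * m)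
    have hc : ContinuousAt (fun p : Λ × Λ => p.1 * p.2) (l, m) := by fun_prop
    have hpre : (fun p : Λ × Λ => p.1 * p.2) ⁻¹' Ulm ∈ 𝓝 (l, m) :=
      hc.preimage_mem_nhds hUlm
    obtain ⟨u, hu, v, hv, huv⟩ := mem_nhds_prod_iff.mp hpre
    obtain ⟨γ, hγ⟩ := hmeet l (u ∩ Ul) (inter_mem hu hUl)
    obtain ⟨δ, hδ⟩ := hmeet m (v ∩ Um) (inter_mem hv hUm)
    have h1 : |φ (γ * δ) - φ γ - φ δ| ≤ D := hDq γ δ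
    have h2 : |φ (γ * δ) - A (l * m)| ≤ D + 1 := by
      apply hlm
      have hm2 : ((γ : Λ), (δ : Λ)) ∈ u ×ˢ v := ⟨hγ.1, hδ.1⟩
      simpa using huv hm2
    have h3 := hl γ hγ.2
    have h4 := hm δ hδ.2
    rw [abs_le] at h1 h2 h3 h4 ⊢
    simp only [hDAdef]
    constructor <;> linarith [h1.1, h1.2, h2.1, h2.2, h3.1, h3.2, h4.1, h4.2]
  -- powers and inverses
  have hApow : ∀ (l : Λ) (n : ℕ), |A (l ^ n) - n * A l| ≤ n * DA + (D + 1) := by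
    intro l n
    induction n with
    | zero => simpa using hA1
    | succ n ih =>
      have h1 : |A (l ^ n * l) - A (l ^ n) - A l| ≤ DA := hAq _ _
      rw [pow_succ]
      rw [abs_le] at h1 ih ⊢
      push_cast
      constructor <;> linarith [h1.1, h1.2, ih.1, ih.2]
  have hAinv : ∀ l : Λ, |A l⁻¹ + A l| ≤ DA + (D + 1) := by
    intro l
    have h1 : |A (l⁻¹ * l) - A l⁻¹ - A l| ≤ DA := hAq l⁻¹ l
    rw [inv_mul_cancel] at h1
    rw [abs_le] at h1 hA1 ⊢
    constructor <;> linarith [h1.1, h1.2, hA1.1, hA1.2]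
  -- the homogenizing sequence
  set a : Λ → ℕ → ℝ := fun l k => A (l ^ (2 ^ k)) / 2 ^ k with hadef
  have habs : ∀ (x y c : ℝ) (k : ℕ), |x - y| ≤ c → |x / 2 ^ k - y / 2 ^ k| ≤ c / 2 ^ k := by
    intro x y c k h
    have h3 : (0 : ℝ) < 2 ^ k := by positivity
    rw [div_sub_div_same, abs_div, abs_of_pos h3]
    gcongr
  have hstep : ∀ (l : Λ) (k : ℕ), |a l (k + 1) - a l k| ≤ DA / 2 ^ (k + 1) := by
    intro l k
    have h1 : |A (l ^ 2 ^ k * l ^ 2 ^ k) - A (l ^ 2 ^ k) - A (l ^ 2 ^ k)| ≤ DA := hAq _ _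
    have e : l ^ 2 ^ (k + 1) = l ^ 2 ^ k * l ^ 2 ^ k := by
      rw [← pow_add]; congr 1; ring
    have h3 : (0 : ℝ) < 2 ^ k := by positivity
    have e2 : a l (k + 1) - a l k
        = (A (l ^ 2 ^ k * l ^ 2 ^ k) - 2 * A (l ^ 2 ^ k)) / 2 ^ (k + 1) := by
      simp only [hadef, e]
      field_simp
      ring
    have h2 : (0 : ℝ) < 2 ^ (k + 1) := by positivity
    rw [e2, abs_div, abs_of_pos h2]
    have h4 : |A (l ^ 2 ^ k * l ^ 2 ^ k) - 2 * A (l ^ 2 ^ k)| ≤ DA := by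
      rw [abs_le] at h1 ⊢
      constructor <;> linarith [h1.1, h1.2]
    gcongr
  have hexists : ∀ l : Λ, ∃ L : ℝ, Tendsto (fun k => a l k) atTop (𝓝 L) := by
    intro l
    apply cauchySeq_tendsto_of_complete
    apply cauchySeq_of_le_geometric (1 / 2) DA (by norm_num)
    intro k
    rw [Real.dist_eq]
    calc |a l k - a l (k + 1)| = |a l (k + 1) - a l k| := abs_sub_comm _ _
      _ ≤ DA / 2 ^ (k + 1) := hstep l k
      _ ≤ DA * (1 / 2) ^ k := by
          rw [div_pow, one_pow, mul_one_div]
          gcongr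
          · norm_num
          · omega
  choose ψ hψ using hexists
  -- limit comparison helper
  have hlim : ∀ (l : Λ) (g : ℕ → ℝ) (L C : ℝ), (∀ k, |a l k - g k| ≤ C / 2 ^ k) →
      Tendsto g atTop (𝓝 L) → ψ l = L := by
    intro l g L C hbnd hg
    have h0 : Tendsto (fun k : ℕ => C * (1 / 2 : ℝ) ^ k) atTop (𝓝 0) := by
      simpa using (tendsto_pow_atTop_nhds_zero_of_lt_one (by norm_num : (0:ℝ) ≤ 1/2)
        (by norm_num)).const_mul C
    have hdiff : Tendsto (fun k => a l k - g k) atTop (𝓝 0) := by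
      apply squeeze_zero_norm _ h0
      intro k
      rw [Real.norm_eq_abs]
      calc |a l k - g k| ≤ C / 2 ^ k := hbnd k
        _ = C * (1 / 2) ^ k := by rw [div_pow, one_pow, mul_one_div]
    have hsum : Tendsto (fun k => a l k) atTop (𝓝 (0 + L)) := by
      have := hdiff.add hg
      simpa using this
    rw [zero_add] at hsum
    exact tendsto_nhds_unique (hψ l) hsum
  -- ψ is close to A
  have hbd : ∀ (l : Λ) (k : ℕ), |a l k - A l| ≤ DA - DA / 2 ^ k := by
    intro l k
    induction k with
    | zero => simp [hadef, pow_one]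
    | succ k ih =>
      have h1 := hstep l k
      have h2 : DA / 2 ^ k = 2 * (DA / 2 ^ (k + 1)) := by
        field_simp; ring
      calc |a l (k + 1) - A l| ≤ |a l (k + 1) - a l k| + |a l k - A l| := by
            have := abs_sub_le (a l (k + 1)) (a l k) (A l)
            linarith
        _ ≤ DA / 2 ^ (k + 1) + (DA - DA / 2 ^ k) := by linarith
        _ = DA - DA / 2 ^ (k + 1) := by linarith
  have hψA : ∀ l : Λ, |ψ l - A l| ≤ DA := by
    intro l
    have ht : Tendsto (fun k => |a l k - A l|) atTop (𝓝 |ψ l - A l|) :=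
      ((hψ l).sub_const (A l)).abs
    apply le_of_tendsto ht
    filter_upwards with k
    have h2 : (0:ℝ) < DA / 2 ^ k := by positivity
    linarith [hbd l k]
  -- ψ is a quasimorphism
  have hψq : ∀ p q : Λ, |ψ (p * q) - ψ p - ψ q| ≤ 4 * DA := by
    intro p q
    have h1 := hψA (p * q)
    have h2 := hψA p
    have h3 := hψA q
    have h4 := hAq p q
    rw [abs_le] at h1 h2 h3 h4 ⊢
    constructor <;> linarith [h1.1, h1.2, h2.1, h2.2, h3.1, h3.2, h4.1, h4.2]
  -- ψ restricted to Γ is φ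
  have hrestr : ∀ δ : Γ, ψ (δ : Λ) = φ δ := by
    intro δ
    apply hlim (δ : Λ) (fun _ => φ δ) (φ δ) (D + 1) _ tendsto_const_nhds
    intro k
    have e : ((δ : Λ)) ^ 2 ^ k = ((δ ^ 2 ^ k : Γ) : Λ) := by push_cast; ring
    have h2 : φ (δ ^ 2 ^ k) = (2 ^ k : ℝ) * φ δ := by
      have h2' := hhom δ ((2 ^ k : ℕ) : ℤ)
      rw [zpow_natCast] at h2'
      push_cast at h2'
      push_cast
      exact h2'
    have e3 : φ δ = (2 ^ k : ℝ) * φ δ / 2 ^ k := by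
      field_simp
    simp only [hadef, e]
    rw [e3]
    apply habs
    rw [← h2]
    exact hAΓ _
  -- homogeneity over ℕ
  have hψpow : ∀ (l : Λ) (n : ℕ), ψ (l ^ n) = n * ψ l := by
    intro l n
    apply hlim (l ^ n) (fun k => n * a l k) (n * ψ l) (n * DA + (D + 1))
      _ ((hψ l).const_mul _)
    intro k
    have e : (l ^ n) ^ 2 ^ k = (l ^ 2 ^ k) ^ n := pow_right_comm l n (2 ^ k)
    simp only [hadef, e, mul_div_assoc']
    apply habs
    exact hApow (l ^ 2 ^ k) n
  -- inverses
  have hψinv : ∀ l : Λ, ψ l⁻¹ = -ψ l := by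
    intro l
    apply hlim l⁻¹ (fun k => -(a l k)) (-ψ l) (DA + (D + 1)) _ (hψ l).neg
    intro k
    have e : (l⁻¹) ^ 2 ^ k = (l ^ 2 ^ k)⁻¹ := inv_pow l (2 ^ k)
    simp only [hadef, e, ← neg_div]
    apply habs
    rw [sub_neg_eq_add]
    exact hAinv _
  -- homogeneity over ℤ
  have hψzpow : ∀ (g : Λ) (n : ℤ), ψ (g ^ n) = n * ψ g := by
    intro g n
    cases n with
    | ofNat m =>
      have : g ^ (Int.ofNat m) = g ^ m := zpow_natCast g m
      rw [this, hψpow]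
      simp
    | negSucc m =>
      rw [zpow_negSucc, hψinv, hψpow]
      simp [Int.cast_negSucc]
      push_cast
      ring
  -- ψ is bounded on W
  have hC : ∀ x ∈ W, |ψ x| ≤ DA + (D + 2) := by
    intro x hx
    obtain ⟨U, hU, h⟩ := hA x
    obtain ⟨γ, hγ⟩ := hmeet x (U ∩ W) (inter_mem hU (hWo.mem_nhds hx))
    have h1 := h γ hγ.1
    have h2 := hWb γ hγ.2
    have h3 := hψA x
    rw [abs_le] at h1 h2 h3 ⊢
    constructor <;> linarith [h1.1, h1.2, h2.1, h2.2, h3.1, h3.2]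
  -- continuity
  have hcontψ : Continuous ψ := by
    rw [continuous_iff_continuousAt]
    intro l
    rw [ContinuousAt, Metric.tendsto_nhds]
    intro ε hε
    obtain ⟨n, hn⟩ := exists_nat_gt ((4 * DA + (DA + (D + 2))) / ε)
    have hpos : (0:ℝ) < (4 * DA + (DA + (D + 2))) / ε := by positivity
    have hn0 : (0:ℝ) < n := hpos.trans hn
    have hkey : (4 * DA + (DA + (D + 2))) / n < ε := by
      rw [div_lt_iff₀ hn0]
      rw [div_lt_iff₀ hε] at hn
      linarith [hn]
    have hc : ContinuousAt (fun x : Λ => x ^ n * (l ^ n)⁻¹) l := by fun_prop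
    have hev : ∀ᶠ x in 𝓝 l, x ^ n * (l ^ n)⁻¹ ∈ W := by
      have h1 : W ∈ 𝓝 ((fun x : Λ => x ^ n * (l ^ n)⁻¹) l) := by
        simpa using hWo.mem_nhds hW1
      exact hc.eventually_mem h1
    filter_upwards [hev] with x hx
    have hw := hC _ hx
    have h1 := hψq (x ^ n * (l ^ n)⁻¹) (l ^ n)
    rw [inv_mul_cancel_right] at h1
    have h2 : ψ (x ^ n) = n * ψ x := hψpow x n
    have h3 : ψ (l ^ n) = n * ψ l := hψpow l n
    rw [Real.dist_eq]
    have h5 : |ψ x - ψ l| * n ≤ 4 * DA + (DA + (D + 2)) := by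
      have e : (ψ x - ψ l) * n = ψ (x ^ n) - ψ (l ^ n) := by rw [h2, h3]; ring
      calc |ψ x - ψ l| * n = |(ψ x - ψ l) * n| := by
            rw [abs_mul, Nat.abs_cast]
        _ = |ψ (x ^ n) - ψ (l ^ n)| := by rw [e]
        _ ≤ 4 * DA + (DA + (D + 2)) := by
            rw [abs_le] at h1 hw ⊢
            constructor <;> linarith [h1.1, h1.2, hw.1, hw.2]
    calc |ψ x - ψ l| ≤ (4 * DA + (DA + (D + 2))) / n := by
          rw [le_div_iff₀ hn0]; exact h5
      _ < ε := hkey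
  exact ⟨ψ, ⟨4 * DA, by linarith, hψq⟩, hψzpow, hcontψ, hrestr⟩
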